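/- Let X be a locally bounded coarsely SIN topological group. Then the lower and upper topologies on Aut(X) coincide. -/

import Mathlib

open Filter Set Pointwise

/-- A subset `A` of a topological group is (coarsely) bounded if for every
increasing exhaustive sequence of open sets `(V n)` with `V n * V n ⊆ V (n+1)`,
some `V k` contains `A`. -/
def CoarselyBdd (X : Type*) [Group X] [TopologicalSpace X] (A : Set X) : Prop :=
  ∀ V : ℕ → Set X, (∀ n, IsOpen (V n)) → (∀ n, V n ⊆ V (n + 1)) →
    (∀ n, V n * V n ⊆ V (n + 1)) → (⋃ n, V n) = Set.univ → ∃ k, A ⊆ V k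
set_option linter.unusedVariables false

/-- The group of bicontinuous automorphisms of a topological group `X`. -/
def contAut (X : Type*) [Group X] [TopologicalSpace X] : Subgroup (MulAut X) where
  carrier := {f | Continuous ⇑f ∧ Continuous ⇑f.symm}
  one_mem' := ⟨continuous_id, continuous_id⟩
  mul_mem' := fun {a b} ha hb => ⟨ha.1.comp hb.1, hb.2.comp ha.2⟩
  inv_mem' := fun {a} ha => ⟨ha.2, ha.1⟩

/-- The uniform structure (given as a uniformity filter) of uniform biconvergence on
bounded sets on `contAut X` with respect to the *upper* uniform structure of `X`,
whose entourages are generated by `{(x,y) | x⁻¹ * y ∈ V ∧ x * y⁻¹ ∈ V}`. -/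
def upperBiUniformity (X : Type*) [Group X] [TopologicalSpace X] :
    Filter (↥(contAut X) × ↥(contAut X)) :=
  ⨅ (B : Set X) (_ : CoarselyBdd X B) (V : Set X) (_ : V ∈ nhds (1 : X)),
    Filter.principal {p | ∀ x ∈ B,
      ((p.1.1 x)⁻¹ * p.2.1 x ∈ V ∧ p.1.1 x * (p.2.1 x)⁻¹ ∈ V) ∧
      ((p.1.1.symm x)⁻¹ * p.2.1.symm x ∈ V ∧ p.1.1.symm x * (p.2.1.symm x)⁻¹ ∈ V)}

/-- The uniform structure (given as a uniformity filter) of uniform biconvergence on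
bounded sets on `contAut X` with respect to the *lower (Roelcke)* uniform structure
of `X`, whose entourages are generated by `{(x,y) | x ∈ V * {y} * V}`. -/
def lowerBiUniformity (X : Type*) [Group X] [TopologicalSpace X] :
    Filter (↥(contAut X) × ↥(contAut X)) :=
  ⨅ (B : Set X) (_ : CoarselyBdd X B) (V : Set X) (_ : V ∈ nhds (1 : X)),
    Filter.principal {p | ∀ x ∈ B,
      p.1.1 x ∈ V * {p.2.1 x} * V ∧ p.1.1.symm x ∈ V * {p.2.1.symm x} * V}

/-- The topology defined by a uniformity filter `U` on `G`. -/
def topOfUniformity {G : Type*} (U : Filter (G × G)) : TopologicalSpace G where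
  IsOpen s := ∀ g ∈ s, {p : G × G | p.1 = g → p.2 ∈ s} ∈ U
  isOpen_univ := fun g _ => by simp
  isOpen_inter := by
    intro s t hs ht g hg
    filter_upwards [hs g hg.1, ht g hg.2] with p h1 h2 he
    exact ⟨h1 he, h2 he⟩
  isOpen_sUnion := by
    intro S hS g hg
    obtain ⟨s, hsS, hgs⟩ := hg
    filter_upwards [hS s hsS g hgs] with p h he
    exact ⟨s, hsS, h he⟩

section Aux

variable {X : Type*} [Group X] [TopologicalSpace X]

theorem CoarselyBdd.mono {A B : Set X} (h : A ⊆ B) (hB : CoarselyBdd X B) :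
    CoarselyBdd X A := fun V h1 h2 h3 h4 =>
  (hB V h1 h2 h3 h4).imp fun _ hk => h.trans hk

theorem coarselyBdd_empty : CoarselyBdd X ∅ := fun _ _ _ _ _ => ⟨0, by simp⟩

theorem CoarselyBdd.union {A B : Set X} (hA : CoarselyBdd X A) (hB : CoarselyBdd X B) :
    CoarselyBdd X (A ∪ B) := by
  intro V h1 h2 h3 h4
  obtain ⟨k, hk⟩ := hA V h1 h2 h3 h4
  obtain ⟨j, hj⟩ := hB V h1 h2 h3 h4
  have hmono : Monotone V := monotone_nat_of_le_succ h2
  exact ⟨max k j, union_subset (hk.trans (hmono (le_max_left _ _)))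
    (hj.trans (hmono (le_max_right _ _)))⟩

theorem CoarselyBdd.inv [IsTopologicalGroup X] {A : Set X} (hA : CoarselyBdd X A) :
    CoarselyBdd X A⁻¹ := by
  intro V h1 h2 h3 h4
  have hmono : Monotone V := monotone_nat_of_le_succ h2
  set W : ℕ → Set X := fun n => V n ∩ (V n)⁻¹ with hWdef
  obtain ⟨k, hk⟩ := hA W (fun n => (h1 n).inter (h1 n).inv)
    (fun n => inter_subset_inter (h2 n) (Set.inv_subset_inv.mpr (h2 n)))
    (by
      intro n x hx
      obtain ⟨a, ha, b, hb, rfl⟩ := hx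
      refine ⟨h3 n (mul_mem_mul ha.1 hb.1), ?_⟩
      rw [Set.mem_inv, mul_inv_rev]
      exact h3 n (mul_mem_mul (Set.mem_inv.mp hb.2) (Set.mem_inv.mp ha.2)))
    (by
      ext x
      simp only [mem_iUnion, mem_univ, iff_true]
      have hx1 : x ∈ ⋃ n, V n := h4 ▸ mem_univ x
      have hx2 : x⁻¹ ∈ ⋃ n, V n := h4 ▸ mem_univ x⁻¹
      obtain ⟨n, hn⟩ := mem_iUnion.mp hx1
      obtain ⟨m, hm⟩ := mem_iUnion.mp hx2
      exact ⟨max n m, hmono (le_max_left n m) hn,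
        Set.mem_inv.mpr (hmono (le_max_right n m) hm)⟩)
  refine ⟨k, fun x hx => ?_⟩
  have : x⁻¹ ∈ W k := hk hx
  simpa using this.2

theorem CoarselyBdd.image {A : Set X} (g : X ≃* X) (hg : Continuous g)
    (hA : CoarselyBdd X A) : CoarselyBdd X (⇑g '' A) := by
  intro V h1 h2 h3 h4
  obtain ⟨k, hk⟩ := hA (fun n => ⇑g ⁻¹' (V n)) (fun n => (h1 n).preimage hg)
    (fun n => preimage_mono (h2 n))
    (by
      intro n x hx
      obtain ⟨a, ha, b, hb, rfl⟩ := hx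
      show g (a * b) ∈ V (n + 1)
      rw [map_mul]
      exact h3 n (mul_mem_mul ha hb))
    (by
      ext x
      simp only [mem_iUnion, mem_univ, iff_true, mem_preimage]
      exact mem_iUnion.mp (h4 ▸ mem_univ (g x)))
  exact ⟨k, by rintro _ ⟨x, hx, rfl⟩; exact hk hx⟩

theorem mem_biInfBdd {α : Type*} (E : Set X → Set X → Set α)
    (hdir : ∀ B₁ B₂ V₁ V₂ : Set X, E (B₁ ∪ B₂) (V₁ ∩ V₂) ⊆ E B₁ V₁ ∩ E B₂ V₂)
    {S : Set α} :
    S ∈ (⨅ (B : Set X) (_ : CoarselyBdd X B) (V : Set X) (_ : V ∈ nhds (1 : X)),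
        Filter.principal (E B V)) ↔
      ∃ B, CoarselyBdd X B ∧ ∃ V ∈ nhds (1 : X), E B V ⊆ S := by
  have hre : (⨅ (B : Set X) (_ : CoarselyBdd X B) (V : Set X) (_ : V ∈ nhds (1 : X)),
      Filter.principal (E B V)) =
      ⨅ (i : {B : Set X // CoarselyBdd X B} × {V : Set X // V ∈ nhds (1 : X)}),
        Filter.principal (E i.1.1 i.2.1) := by
    rw [iInf_prod]
    simp_rw [iInf_subtype']
  rw [hre]
  haveI : Nonempty ({B : Set X // CoarselyBdd X B} × {V : Set X // V ∈ nhds (1 : X)}) :=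
    ⟨⟨⟨∅, coarselyBdd_empty⟩, ⟨univ, univ_mem⟩⟩⟩
  rw [mem_iInf_of_directed]
  · constructor
    · rintro ⟨⟨⟨B, hB⟩, ⟨V, hV⟩⟩, h⟩
      exact ⟨B, hB, V, hV, Filter.mem_principal.mp h⟩
    · rintro ⟨B, hB, V, hV, h⟩
      exact ⟨⟨⟨B, hB⟩, ⟨V, hV⟩⟩, Filter.mem_principal.mpr h⟩
  · rintro ⟨⟨B₁, h1⟩, ⟨V₁, hV1⟩⟩ ⟨⟨B₂, h2⟩, ⟨V₂, hV2⟩⟩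
    exact ⟨⟨⟨B₁ ∪ B₂, h1.union h2⟩, ⟨V₁ ∩ V₂, inter_mem hV1 hV2⟩⟩,
      Filter.principal_mono.mpr fun x hx => (hdir _ _ _ _ hx).1,
      Filter.principal_mono.mpr fun x hx => (hdir _ _ _ _ hx).2⟩

end Aux


section Main

variable {X : Type*} [Group X] [TopologicalSpace X]

omit [TopologicalSpace X] in
theorem key_calc {V₁ V W₀ C : Set X}
    (hV₁mul : V₁ * V₁ ⊆ V)
    (hconj : ∀ y ∈ C, ∀ w ∈ W₀, y * w * y⁻¹ ∈ V₁)
    {a b w1 w2 : X} (ha : a ∈ C) (hainv : a⁻¹ ∈ C)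
    (hw1 : w1 ∈ W₀ ∩ V₁) (hw1' : w1⁻¹ ∈ W₀ ∩ V₁)
    (hw2 : w2 ∈ W₀ ∩ V₁) (hw2' : w2⁻¹ ∈ W₀ ∩ V₁)
    (hEq : w1 * b * w2 = a) : a⁻¹ * b ∈ V ∧ a * b⁻¹ ∈ V := by
  have hb : b = w1⁻¹ * a * w2⁻¹ := by rw [← hEq]; group
  constructor
  · have h1 : a⁻¹ * w1⁻¹ * a⁻¹⁻¹ ∈ V₁ := hconj a⁻¹ hainv w1⁻¹ hw1'.1
    have h2 := hV₁mul (mul_mem_mul h1 hw2'.2)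
    have heq : a⁻¹ * b = a⁻¹ * w1⁻¹ * a⁻¹⁻¹ * w2⁻¹ := by rw [hb]; group
    rwa [heq]
  · have h1 : a * w2 * a⁻¹ ∈ V₁ := hconj a ha w2 hw2.1
    have h2 := hV₁mul (mul_mem_mul h1 hw1.2)
    have heq : a * b⁻¹ = a * w2 * a⁻¹ * w1 := by rw [hb]; group
    rwa [heq]

theorem mem_upper_iff {S : Set (↥(contAut X) × ↥(contAut X))} :
    S ∈ upperBiUniformity X ↔ ∃ B, CoarselyBdd X B ∧ ∃ V ∈ nhds (1 : X),
      {p : ↥(contAut X) × ↥(contAut X) | ∀ x ∈ B,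
        ((p.1.1 x)⁻¹ * p.2.1 x ∈ V ∧ p.1.1 x * (p.2.1 x)⁻¹ ∈ V) ∧
        ((p.1.1.symm x)⁻¹ * p.2.1.symm x ∈ V ∧ p.1.1.symm x * (p.2.1.symm x)⁻¹ ∈ V)} ⊆ S := by
  unfold upperBiUniformity
  exact mem_biInfBdd _ (by
    rintro B₁ B₂ V₁ V₂ p hp
    constructor
    · intro x hx
      obtain ⟨⟨c1, c2⟩, c3, c4⟩ := hp x (Or.inl hx)
      exact ⟨⟨c1.1, c2.1⟩, c3.1, c4.1⟩
    · intro x hx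
      obtain ⟨⟨c1, c2⟩, c3, c4⟩ := hp x (Or.inr hx)
      exact ⟨⟨c1.2, c2.2⟩, c3.2, c4.2⟩)

theorem mem_lower_iff {S : Set (↥(contAut X) × ↥(contAut X))} :
    S ∈ lowerBiUniformity X ↔ ∃ B, CoarselyBdd X B ∧ ∃ V ∈ nhds (1 : X),
      {p : ↥(contAut X) × ↥(contAut X) | ∀ x ∈ B,
        p.1.1 x ∈ V * {p.2.1 x} * V ∧ p.1.1.symm x ∈ V * {p.2.1.symm x} * V} ⊆ S := by
  unfold lowerBiUniformity
  refine mem_biInfBdd _ ?_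
  rintro B₁ B₂ V₁ V₂ p hp
  have hmul : ∀ y : X, (V₁ ∩ V₂) * {y} * (V₁ ∩ V₂) ⊆ (V₁ * {y} * V₁) ∩ (V₂ * {y} * V₂) :=
    fun y => subset_inter
      (mul_subset_mul (mul_subset_mul inter_subset_left Subset.rfl) inter_subset_left)
      (mul_subset_mul (mul_subset_mul inter_subset_right Subset.rfl) inter_subset_right)
  constructor
  · intro x hx
    obtain ⟨c1, c2⟩ := hp x (Or.inl hx)
    exact ⟨(hmul _ c1).1, (hmul _ c2).1⟩
  · intro x hx
    obtain ⟨c1, c2⟩ := hp x (Or.inr hx)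
    exact ⟨(hmul _ c1).2, (hmul _ c2).2⟩

theorem upper_le_lower : upperBiUniformity X ≤ lowerBiUniformity X := by
  unfold upperBiUniformity lowerBiUniformity
  refine le_iInf fun B => le_iInf fun hB => le_iInf fun V => le_iInf fun hV => ?_
  refine iInf_le_of_le B (iInf_le_of_le hB (iInf_le_of_le V (iInf_le_of_le hV ?_)))
  refine Filter.principal_mono.mpr fun p hp x hx => ?_
  obtain ⟨⟨h1, h2⟩, h3, h4⟩ := hp x hx
  have h1V : (1 : X) ∈ V := mem_of_mem_nhds hV
  constructor
  · exact ⟨(p.1.1 x * (p.2.1 x)⁻¹) * p.2.1 x,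
      ⟨p.1.1 x * (p.2.1 x)⁻¹, h2, p.2.1 x, rfl, rfl⟩, 1, h1V, by group⟩
  · exact ⟨(p.1.1.symm x * (p.2.1.symm x)⁻¹) * p.2.1.symm x,
      ⟨p.1.1.symm x * (p.2.1.symm x)⁻¹, h4, p.2.1.symm x, rfl, rfl⟩, 1, h1V, by group⟩

end Main

/-- For a locally bounded coarsely SIN topological group `X`, the lower and upper
topologies (of uniform biconvergence on bounded sets w.r.t. the lower resp. upper
uniform structures of `X`) on the automorphism group coincide. -/
theorem lower_eq_upper_topology_of_coarselySIN {X : Type*} [Group X]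
    [TopologicalSpace X] [IsTopologicalGroup X]
    (hlb : ∃ U ∈ nhds (1 : X), CoarselyBdd X U)
    (hcsin : ∀ U ∈ nhds (1 : X), ∀ B : Set X, CoarselyBdd X B →
      ∃ V ∈ nhds (1 : X), ∀ x ∈ B, ∀ v ∈ V, x * v * x⁻¹ ∈ U) :
    topOfUniformity (upperBiUniformity X) = topOfUniformity (lowerBiUniformity X) := by
  apply TopologicalSpace.ext
  funext s
  apply propext
  show (∀ g ∈ s, {p : ↥(contAut X) × ↥(contAut X) | p.1 = g → p.2 ∈ s} ∈ upperBiUniformity X) ↔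
    (∀ g ∈ s, {p : ↥(contAut X) × ↥(contAut X) | p.1 = g → p.2 ∈ s} ∈ lowerBiUniformity X)
  constructor
  · -- upper-open implies lower-open : the hard direction
    intro h g hg
    obtain ⟨B, hB, V, hV, hsub⟩ := mem_upper_iff.mp (h g hg)
    -- continuity of g
    have hgc : Continuous ⇑g.1 ∧ Continuous ⇑g.1.symm := g.2
    -- a symmetric neighborhood V₁ with V₁ * V₁ ⊆ V
    obtain ⟨V₀, hV₀o, hV₀1, hV₀m⟩ := exists_open_nhds_one_mul_subset hV
    set V₁ : Set X := V₀ ∩ V₀⁻¹ with hV₁def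
    have hV₀n : V₀ ∈ nhds (1 : X) := hV₀o.mem_nhds hV₀1
    have hV₁ : V₁ ∈ nhds (1 : X) := inter_mem hV₀n (inv_mem_nhds_one X hV₀n)
    have hV₁mul : V₁ * V₁ ⊆ V :=
      (mul_subset_mul inter_subset_left inter_subset_left).trans hV₀m
    -- the bounded set C
    set D : Set X := ⇑g.1 '' B ∪ ⇑g.1.symm '' B with hDdef
    set C : Set X := D ∪ D⁻¹ with hCdef
    have hD : CoarselyBdd X D := (hB.image g.1 hgc.1).union (hB.image g.1.symm hgc.2)
    have hC : CoarselyBdd X C := hD.union hD.inv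
    -- coarse SIN
    obtain ⟨W₀, hW₀, hW₀conj⟩ := hcsin V₁ hV₁ C hC
    set W : Set X := (W₀ ∩ V₁) ∩ (W₀ ∩ V₁)⁻¹ with hWdef
    have hW : W ∈ nhds (1 : X) :=
      inter_mem (inter_mem hW₀ hV₁) (inv_mem_nhds_one X (inter_mem hW₀ hV₁))
    refine mem_lower_iff.mpr ⟨B, hB, W, hW, ?_⟩
    rintro ⟨f, h2⟩ hp hfe
    simp only [Set.mem_setOf_eq] at hfe ⊢
    subst hfe
    refine hsub (a := (f, h2)) ?_ rfl
    intro x hx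
    obtain ⟨c1, c2⟩ := hp x hx
    obtain ⟨a1, ha1, w2, hw2, hEq1⟩ := c1
    obtain ⟨w1, hw1, y1, hy1, rfl⟩ := ha1
    rw [Set.mem_singleton_iff] at hy1; subst hy1
    obtain ⟨a2, ha2, w4, hw4, hEq2⟩ := c2
    obtain ⟨w3, hw3, y2, hy2, rfl⟩ := ha2
    rw [Set.mem_singleton_iff] at hy2; subst hy2
    have hmemD1 : f.1 x ∈ D := Or.inl ⟨x, hx, rfl⟩
    have hmemD2 : f.1.symm x ∈ D := Or.inr ⟨x, hx, rfl⟩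
    have hC1 : f.1 x ∈ C := Or.inl hmemD1
    have hC1' : (f.1 x)⁻¹ ∈ C := Or.inr (by simpa using hmemD1)
    have hC2 : f.1.symm x ∈ C := Or.inl hmemD2
    have hC2' : (f.1.symm x)⁻¹ ∈ C := Or.inr (by simpa using hmemD2)
    have k1 := key_calc hV₁mul hW₀conj hC1 hC1' hw1.1 hw1.2 hw2.1 hw2.2 hEq1
    have k2 := key_calc hV₁mul hW₀conj hC2 hC2' hw3.1 hw3.2 hw4.1 hw4.2 hEq2
    exact ⟨⟨k1.1, k1.2⟩, k2.1, k2.2⟩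
  · -- lower-open implies upper-open : immediate from the filter inequality
    intro h g hg
    exact upper_le_lower (h g hg)
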